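/- The type normalisation rules are sound for strong isomorphism: every inner rule σ ⇝ τ and every top rule σ ⟹ τ satisfies σ ≈ₛ τ. -/

import Mathlib

namespace TypeIso

open Relation

/-- Untyped λ-terms with named variables. -/
inductive Term : Type
  | var : ℕ → Term
  | app : Term → Term → Term
  | lam : ℕ → Term → Term
deriving DecidableEq

namespace Term

/-- Free variables. -/
def fv : Term → Finset ℕ
  | var x => {x}
  | app M N => fv M ∪ fv N
  | lam x M => fv M \ {x}

/-- Substitution `M[N/x]` (naive; adequate for the linear terms considered). -/
def subst : Term → ℕ → Term → Term
  | var y, x, N => if y = x then N else var y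
  | app M₁ M₂, x, N => app (subst M₁ x N) (subst M₂ x N)
  | lam y M, x, N => if y = x then lam y M else lam y (subst M x N)

end Term

open Term

/-- One-step β-reduction. -/
inductive Beta : Term → Term → Prop
  | beta (x M N) : Beta (Term.app (Term.lam x M) N) (Term.subst M x N)
  | appL {M M'} (N) : Beta M M' → Beta (Term.app M N) (Term.app M' N)
  | appR (M) {N N'} : Beta N N' → Beta (Term.app M N) (Term.app M N')
  | lam (x) {M M'} : Beta M M' → Beta (Term.lam x M) (Term.lam x M')

/-- One-step η-reduction. -/
inductive Eta : Term → Term → Prop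
  | eta (x M) : x ∉ fv M → Eta (Term.lam x (Term.app M (Term.var x))) M
  | appL {M M'} (N) : Eta M M' → Eta (Term.app M N) (Term.app M' N)
  | appR (M) {N N'} : Eta N N' → Eta (Term.app M N) (Term.app M N')
  | lam (x) {M M'} : Eta M M' → Eta (Term.lam x M) (Term.lam x M')

def BetaStar : Term → Term → Prop := ReflTransGen Beta
def EtaStar : Term → Term → Prop := ReflTransGen Eta
/-- η-expansion: the converse of one-step η-reduction. -/
def EtaExp : Term → Term → Prop := fun a b => Eta b a
def EtaExpStar : Term → Term → Prop := ReflTransGen EtaExp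
def BetaConv : Term → Term → Prop := EqvGen Beta
def BetaEta : Term → Term → Prop := fun a b => Beta a b ∨ Eta a b
def BetaEtaConv : Term → Term → Prop := EqvGen BetaEta

def BetaEtaRed : Term → Term → Prop := ReflTransGen BetaEta

/-- `appList h [a₁,…,aₙ] = h a₁ … aₙ`. -/
def appList (h : Term) (args : List Term) : Term := args.foldl Term.app h
/-- `lamList [y₁,…,yₙ] M = λ y₁ … yₙ. M`. -/
def lamList (xs : List ℕ) (body : Term) : Term := xs.foldr Term.lam body

/-- β-normal finite hereditary permutators:
`λ x y₁ … yₙ. x (P₁ y_{π(1)}) … (Pₙ y_{π(n)})` with each `Pᵢ` an FHP. -/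
inductive FHPnf : Term → Prop
  | mk (x : ℕ) (ys : List ℕ) (Ps : List Term) (π : Equiv.Perm (Fin ys.length))
      (hlen : Ps.length = ys.length)
      (hx : x ∉ ys) (hnd : ys.Nodup)
      (hPs : ∀ P ∈ Ps, FHPnf P) :
      FHPnf (Term.lam x (lamList ys (appList (Term.var x)
        (List.ofFn fun i : Fin ys.length =>
          Term.app (Ps.get (Fin.cast hlen.symm i)) (Term.var (ys.get (π i)))))))

/-- Finite hereditary permutators (modulo β-conversion). -/
def FHP (M : Term) : Prop := ∃ N, BetaConv M N ∧ FHPnf N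

/-- β-normal finite hereditary identities:
`λ x y₁ … yₙ. x (Id₁ y₁) … (Idₙ yₙ)` with each `Idᵢ` an FHI. -/
inductive FHInf : Term → Prop
  | mk (x : ℕ) (ys : List ℕ) (Ids : List Term)
      (hlen : Ids.length = ys.length)
      (hx : x ∉ ys) (hnd : ys.Nodup)
      (hIds : ∀ P ∈ Ids, FHInf P) :
      FHInf (Term.lam x (lamList ys (appList (Term.var x)
        (List.ofFn fun i : Fin ys.length =>
          Term.app (Ids.get (Fin.cast hlen.symm i)) (Term.var (ys.get i))))))

/-- Finite hereditary identities (modulo β-conversion). -/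
def FHI (M : Term) : Prop := ∃ N, BetaConv M N ∧ FHInf N

/-- Types with atoms, ω, arrow, intersection and union. -/
inductive Ty : Type
  | atom : ℕ → Ty
  | omega : Ty
  | arr : Ty → Ty → Ty
  | and : Ty → Ty → Ty
  | or : Ty → Ty → Ty
deriving DecidableEq

/-- Semantic type equivalence `≅`: the least congruence with
`φ ≅ ω→φ`, `ω ≅ ω→ω`, `σ ≅ σ∧ω ≅ ω∧σ`, `ω ≅ σ∨ω ≅ ω∨σ`. -/
inductive SemEq : Ty → Ty → Prop
  | refl (σ) : SemEq σ σ
  | symm : SemEq σ τ → SemEq τ σ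
  | trans : SemEq σ τ → SemEq τ ρ → SemEq σ ρ
  | arr : SemEq σ σ' → SemEq τ τ' → SemEq (Ty.arr σ τ) (Ty.arr σ' τ')
  | and : SemEq σ σ' → SemEq τ τ' → SemEq (Ty.and σ τ) (Ty.and σ' τ')
  | or : SemEq σ σ' → SemEq τ τ' → SemEq (Ty.or σ τ) (Ty.or σ' τ')
  | atomFun (a) : SemEq (Ty.atom a) (Ty.arr Ty.omega (Ty.atom a))
  | omegaFun : SemEq Ty.omega (Ty.arr Ty.omega Ty.omega)
  | andOmegaR (σ) : SemEq σ (Ty.and σ Ty.omega)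
  | andOmegaL (σ) : SemEq σ (Ty.and Ty.omega σ)
  | orOmegaR (σ) : SemEq Ty.omega (Ty.or σ Ty.omega)
  | orOmegaL (σ) : SemEq Ty.omega (Ty.or Ty.omega σ)

/-- Relevant environments, considered up to permutation in the rules. -/
abbrev Env := List (ℕ × Ty)

def Env.dom (Γ : Env) : List ℕ := Γ.map Prod.fst

def EnvDisj (Γ₁ Γ₂ : Env) : Prop := ∀ x, x ∈ Γ₁.dom → x ∉ Γ₂.dom

/-- The intersection-union type assignment system for linear λ-terms (Figure 1). -/
inductive Deriv : Env → Term → Ty → Prop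
  | ax (x σ) : Deriv [(x, σ)] (Term.var x) σ
  | eqv {Γ M σ τ} : Deriv Γ M σ → SemEq σ τ → Deriv Γ M τ
  | perm {Γ Γ' M σ} : Deriv Γ M σ → Γ.Perm Γ' → Deriv Γ' M σ
  | arrI {Γ x σ M τ} : Deriv ((x, σ) :: Γ) M τ → Deriv Γ (Term.lam x M) (Ty.arr σ τ)
  | arrE {Γ₁ Γ₂ M N σ τ} : Deriv Γ₁ M (Ty.arr σ τ) → Deriv Γ₂ N σ → EnvDisj Γ₁ Γ₂ →
      Deriv (Γ₁ ++ Γ₂) (Term.app M N) τ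
  | andI {Γ M σ τ} : Deriv Γ M σ → Deriv Γ M τ → Deriv Γ M (Ty.and σ τ)
  | andE₁ {Γ M σ τ} : Deriv Γ M (Ty.and σ τ) → Deriv Γ M σ
  | andE₂ {Γ M σ τ} : Deriv Γ M (Ty.and σ τ) → Deriv Γ M τ
  | orI₁ {Γ M σ τ} : Deriv Γ M σ → Deriv Γ M (Ty.or σ τ)
  | orI₂ {Γ M σ τ} : Deriv Γ M σ → Deriv Γ M (Ty.or τ σ)
  | orE {Γ₁ Γ₂ x M N σ τ ζ ρ} :
      Deriv ((x, Ty.and σ ζ) :: Γ₁) M ρ →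
      Deriv ((x, Ty.and τ ζ) :: Γ₁) M ρ →
      Deriv Γ₂ N (Ty.and (Ty.or σ τ) ζ) → EnvDisj Γ₁ Γ₂ →
      Deriv (Γ₁ ++ Γ₂) (Term.subst M x N) ρ

/-- Linear λ-terms: every free or bound variable occurs exactly once. -/
inductive Linear : Term → Prop
  | var (x) : Linear (Term.var x)
  | app {M N} : Linear M → Linear N → Disjoint (fv M) (fv N) → Linear (Term.app M N)
  | lam {x M} : Linear M → x ∈ fv M → Linear (Term.lam x M)

/-- A variable fresh for a finite set. -/
def freshVar (s : Finset ℕ) : ℕ := (s.sup id) + 1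

/-- Composition `λx. P (Q x)` with a fresh `x`. -/
def tcomp (P Q : Term) : Term :=
  Term.lam (freshVar (fv P ∪ fv Q))
    (Term.app P (Term.app Q (Term.var (freshVar (fv P ∪ fv Q)))))

/-- `P` and `Q` are inverse of each other: both compositions are βη-equal to the identity. -/
def InvPair (P Q : Term) : Prop :=
  ∃ x, BetaEtaConv (tcomp P Q) (Term.lam x (Term.var x)) ∧
       BetaEtaConv (tcomp Q P) (Term.lam x (Term.var x))

/-- Type isomorphism `σ ≈ τ`. -/
def TyIso (σ τ : Ty) : Prop :=
  ∃ P Q, FHP P ∧ FHP Q ∧ InvPair P Q ∧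
    Deriv [] P (Ty.arr σ τ) ∧ Deriv [] Q (Ty.arr τ σ)

/-- Strong type isomorphism `σ ≈ₛ τ`: proved by a finite hereditary identity. -/
def StrongIso (σ τ : Ty) : Prop :=
  ∃ Id, FHI Id ∧ Deriv [] Id (Ty.arr σ τ) ∧ Deriv [] Id (Ty.arr τ σ)

/-- The normalisation pre-order `≤` on types. -/
inductive NormLe : Ty → Ty → Prop
  | refl (σ) : NormLe σ σ
  | trans {σ τ ρ} : NormLe σ τ → NormLe τ ρ → NormLe σ ρ
  | leOmega (σ) : NormLe σ Ty.omega
  | andE₁ (σ τ) : NormLe (Ty.and σ τ) σ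
  | andE₂ (σ τ) : NormLe (Ty.and σ τ) τ
  | orI₁ (σ τ) : NormLe σ (Ty.or σ τ)
  | orI₂ (σ τ) : NormLe τ (Ty.or σ τ)
  | andI {σ τ ρ} : NormLe σ τ → NormLe σ ρ → NormLe σ (Ty.and τ ρ)
  | orE {σ τ ρ} : NormLe σ τ → NormLe ρ τ → NormLe (Ty.or σ ρ) τ
  | atomArr (a σ) : NormLe (Ty.atom a) (Ty.arr σ (Ty.atom a))
  | omegaArr (σ) : NormLe Ty.omega (Ty.arr σ Ty.omega)
  | arr {σ σ' τ τ'} : NormLe σ' σ → NormLe τ τ' → NormLe (Ty.arr σ τ) (Ty.arr σ' τ')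

/-- Inner type normalisation rules `σ ⇝ τ`. -/
inductive InnerStep : Ty → Ty → Prop
  | atomRule (a) : InnerStep (Ty.arr Ty.omega (Ty.atom a)) (Ty.atom a)
  | omegaRule {σ} : NormLe Ty.omega σ → σ ≠ Ty.omega → InnerStep σ Ty.omega
  | distArrAnd (σ τ ρ) :
      InnerStep (Ty.arr σ (Ty.and τ ρ)) (Ty.and (Ty.arr σ τ) (Ty.arr σ ρ))
  | distAndArr (σ τ ρ ζ) :
      InnerStep (Ty.arr (Ty.and (Ty.or σ τ) ρ) ζ)
                (Ty.arr (Ty.or (Ty.and σ ρ) (Ty.and τ ρ)) ζ)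
  | distOrArr (σ τ ρ) :
      InnerStep (Ty.arr (Ty.or σ τ) ρ) (Ty.and (Ty.arr σ ρ) (Ty.arr τ ρ))
  | distArrOr (σ τ ρ ζ) :
      InnerStep (Ty.arr σ (Ty.or (Ty.and τ ρ) ζ))
                (Ty.arr σ (Ty.and (Ty.or τ ζ) (Ty.or ρ ζ)))
  | eraseAnd {σ τ} : NormLe σ τ → InnerStep (Ty.and σ τ) σ
  | eraseOr {σ τ} : NormLe σ τ → InnerStep (Ty.or σ τ) τ

/-- Type contexts. -/
inductive TyCtx : Type
  | hole : TyCtx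
  | arrL : TyCtx → Ty → TyCtx
  | arrR : Ty → TyCtx → TyCtx
  | andL : TyCtx → Ty → TyCtx
  | andR : Ty → TyCtx → TyCtx
  | orL : TyCtx → Ty → TyCtx
  | orR : Ty → TyCtx → TyCtx

/-- Filling the hole of a type context. -/
def TyCtx.fill : TyCtx → Ty → Ty
  | TyCtx.hole, τ => τ
  | TyCtx.arrL C σ, τ => Ty.arr (C.fill τ) σ
  | TyCtx.arrR σ C, τ => Ty.arr σ (C.fill τ)
  | TyCtx.andL C σ, τ => Ty.and (C.fill τ) σ
  | TyCtx.andR σ C, τ => Ty.and σ (C.fill τ)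
  | TyCtx.orL C σ, τ => Ty.or (C.fill τ) σ
  | TyCtx.orR σ C, τ => Ty.or σ (C.fill τ)

/-- Top normalisation rules `σ ⟹ τ`: contextual closure of the inner rules,
plus `(σ∧τ)∨ρ ⟹ (σ∨ρ)∧(τ∨ρ)` at the top or in right-hand sides of arrows. -/
inductive TopStep : Ty → Ty → Prop
  | ctx {σ τ} (C : TyCtx) : InnerStep σ τ → TopStep (C.fill σ) (C.fill τ)
  | dist (σ τ ρ) :
      TopStep (Ty.or (Ty.and σ τ) ρ) (Ty.and (Ty.or σ ρ) (Ty.or τ ρ))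
  | arrR {τ τ'} (σ) : TopStep τ τ' → TopStep (Ty.arr σ τ) (Ty.arr σ τ')

open Classical in
/-- The normal form of a type w.r.t. the top normalisation rules. -/
noncomputable def nf (σ : Ty) : Ty :=
  if h : ∃ ν, Relation.ReflTransGen TopStep σ ν ∧ ∀ ρ, ¬ TopStep ν ρ then h.choose else σ

/-- `mkArrow [ξ₁,…,ξₙ] μ = ξ₁ → … → ξₙ → μ`. -/
def mkArrow (args : List Ty) (res : Ty) : Ty := args.foldr Ty.arr res

/-- Similarity between sequences of normal types. -/
inductive TySim : List Ty → List Ty → Prop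
  | refl (l) : TySim l l
  | symm {l r} : TySim l r → TySim r l
  | trans {l r s} : TySim l r → TySim r s → TySim l s
  | mergeAnd (l₁ l₂ r₁ r₂ : List Ty) (η₁ η₂ θ₁ θ₂ : Ty) :
      l₁.length = r₁.length →
      TySim (l₁ ++ η₁ :: η₂ :: l₂) (r₁ ++ θ₁ :: θ₂ :: r₂) →
      TySim (l₁ ++ nf (Ty.and η₁ η₂) :: l₂) (r₁ ++ nf (Ty.and θ₁ θ₂) :: r₂)
  | mergeOr (l₁ l₂ r₁ r₂ : List Ty) (η₁ η₂ θ₁ θ₂ : Ty) :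
      l₁.length = r₁.length →
      TySim (l₁ ++ η₁ :: η₂ :: l₂) (r₁ ++ θ₁ :: θ₂ :: r₂) →
      TySim (l₁ ++ nf (Ty.or η₁ η₂) :: l₂) (r₁ ++ nf (Ty.or θ₁ θ₂) :: r₂)
  | arrow (m n : ℕ) (ξ χ : Fin n → Fin m → Ty) (μ ν : Fin m → Ty)
      (π : Equiv.Perm (Fin n)) :
      (∀ i, TySim (List.ofFn (ξ i)) (List.ofFn (χ i))) →
      TySim (List.ofFn μ) (List.ofFn ν) →
      TySim (List.ofFn fun j => nf (mkArrow (List.ofFn fun i => ξ i j) (μ j)))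
            (List.ofFn fun j => nf (mkArrow (List.ofFn fun i => χ (π i) j) (ν j)))


/-! ### Auxiliary development -/

/-- Structural size of a type. -/
def tsize : Ty → ℕ
  | Ty.atom _ => 1
  | Ty.omega => 1
  | Ty.arr a b => tsize a + tsize b + 1
  | Ty.and a b => tsize a + tsize b + 1
  | Ty.or a b => tsize a + tsize b + 1

theorem tsize_pos (σ : Ty) : 1 ≤ tsize σ := by
  cases σ <;> simp [tsize]

theorem toOmega {Γ M σ} (d : Deriv Γ M σ) : Deriv Γ M Ty.omega :=
  Deriv.andE₂ (Deriv.eqv d (SemEq.andOmegaR σ))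

theorem disj_nil (Γ : Env) : EnvDisj [] Γ := by
  intro x hx; simp [Env.dom] at hx

theorem disj_singleton {Γ : Env} {y : ℕ} {A : Ty} (hy : y ∉ Env.dom Γ) :
    EnvDisj Γ [(y, A)] := by
  intro x hx hmem
  simp [Env.dom] at hmem
  subst hmem; exact hy hx

theorem head_ext {Γ : Env} {M arg : Term} {A B C : Ty} {y : ℕ}
    (dM : Deriv Γ M (Ty.arr A B)) (darg : Deriv [(y, C)] arg A)
    (hy : y ∉ Env.dom Γ) :
    Deriv ((y, C) :: Γ) (Term.app M arg) B := by
  have h := Deriv.arrE dM darg (disj_singleton hy)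
  exact Deriv.perm h (List.perm_append_comm)

/-- The body shape of the hereditary identity tower. -/
def Bod (P : Term) (ys : List ℕ) (M : Term) : Term :=
  lamList ys (appList M (ys.map fun y => Term.app P (Term.var y)))

/-- The hereditary identity towers. -/
def TT : ℕ → Term
  | 0 => Term.lam 0 (Term.var 0)
  | (n+1) => Term.lam 0 (Bod (TT n) (List.range' 1 (n+1)) (Term.var 0))

theorem Bod_nil (P M) : Bod P [] M = M := rfl

theorem Bod_cons (P y ys M) :
    Bod P (y :: ys) M
      = Term.lam y (Bod P ys (Term.app M (Term.app P (Term.var y)))) := rfl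

theorem fv_lamList (ys : List ℕ) (B : Term) :
    fv (lamList ys B) = fv B \ ys.toFinset := by
  induction ys with
  | nil => simp [lamList]
  | cons y ys ih =>
      show fv (Term.lam y (lamList ys B)) = _
      rw [show fv (Term.lam y (lamList ys B)) = fv (lamList ys B) \ {y} from rfl, ih]
      ext a; simp [Finset.mem_sdiff]; tauto

theorem fv_appList (H : Term) (l : List Term) :
    fv (appList H l) = fv H ∪ l.foldr (fun t s => fv t ∪ s) ∅ := by
  induction l generalizing H with
  | nil => simp [appList]
  | cons t l ih =>
      show fv (appList (Term.app H t) l) = _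
      rw [ih]
      show fv H ∪ fv t ∪ _ = _
      ext a; simp

theorem fv_Bod_args {P : Term} (hP : fv P = ∅) (ys : List ℕ) :
    (ys.map fun y => Term.app P (Term.var y)).foldr (fun t s => fv t ∪ s) ∅
      = ys.toFinset := by
  induction ys with
  | nil => simp
  | cons y ys ih =>
      simp only [List.map_cons, List.foldr_cons, ih, List.toFinset_cons]
      show fv P ∪ {y} ∪ ys.toFinset = _
      rw [hP]
      ext a; simp

theorem fv_TT : ∀ m, fv (TT m) = ∅ := by
  intro m
  induction m with
  | zero => simp [TT, fv]
  | succ n ih =>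
      show fv (Term.lam 0 (Bod (TT n) (List.range' 1 (n+1)) (Term.var 0))) = ∅
      rw [show fv (Term.lam 0 (Bod (TT n) (List.range' 1 (n+1)) (Term.var 0)))
            = fv (Bod (TT n) (List.range' 1 (n+1)) (Term.var 0)) \ {0} from rfl]
      rw [Bod, fv_lamList, fv_appList, fv_Bod_args ih]
      ext a
      simp [fv]

theorem subst_of_not_mem_fv : ∀ (M : Term) {x : ℕ} (N : Term), x ∉ fv M →
    Term.subst M x N = M := by
  intro M
  induction M with
  | var y =>
      intro x N hx; simp [fv] at hx
      show (if y = x then N else Term.var y) = Term.var y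
      rw [if_neg]; intro h; exact hx h.symm
  | app M₁ M₂ ih₁ ih₂ =>
      intro x N hx
      simp [fv] at hx
      simp [Term.subst, ih₁ _ hx.1, ih₂ _ hx.2]
  | lam y M ih =>
      intro x N hx
      by_cases h : y = x
      · simp [Term.subst, h]
      · have hx' : x ∉ fv M := by
          simp [fv] at hx
          intro hc; exact h (hx hc).symm
        simp [Term.subst, h, ih _ hx']

theorem subst_lamList (ys : List ℕ) (B : Term) {x : ℕ} (N : Term) (hx : x ∉ ys) :
    Term.subst (lamList ys B) x N = lamList ys (Term.subst B x N) := by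
  induction ys with
  | nil => rfl
  | cons y ys ih =>
      have hxy : ¬ y = x := by intro h; exact hx (by simp [h])
      show Term.subst (Term.lam y (lamList ys B)) x N = _
      simp only [Term.subst, hxy, if_false]
      rw [ih (by intro h; exact hx (by simp [h]))]
      rfl

theorem subst_appList (H : Term) (l : List Term) {x : ℕ} (N : Term) :
    Term.subst (appList H l) x N
      = appList (Term.subst H x N) (l.map (fun t => Term.subst t x N)) := by
  induction l generalizing H with
  | nil => rfl
  | cons t l ih =>
      show Term.subst (appList (Term.app H t) l) x N = _
      rw [ih]
      rfl

theorem subst_Bod {P : Term} {ys : List ℕ} {z : ℕ} (N : Term)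
    (hz : z ∉ ys) (hP : fv P = ∅) :
    Term.subst (Bod P ys (Term.var z)) z N = Bod P ys N := by
  rw [Bod, subst_lamList _ _ _ hz, subst_appList]
  show lamList ys (appList (if z = z then N else Term.var z) _) = _
  rw [if_pos rfl, Bod]
  congr 1
  congr 1
  rw [List.map_map]
  apply List.map_congr_left
  intro y hy
  show Term.subst (Term.app P (Term.var y)) z N = Term.app P (Term.var y)
  have hyz : ¬ y = z := by intro h; exact hz (h ▸ hy)
  simp [Term.subst, hyz, subst_of_not_mem_fv P N (by simp [hP])]

theorem fresh_not_mem (s : Finset ℕ) : freshVar s ∉ s := fun h =>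
  Nat.not_succ_le_self (s.sup id)
    (by simpa [freshVar] using Finset.le_sup (f := id) h)

theorem Brefl_inner (m : ℕ) (hTid : ∀ σ, Deriv [] (TT m) (Ty.arr σ σ)) :
    ∀ (k : ℕ) (ys : List ℕ) (σ : Ty) (Γ : Env) (M : Term),
      ys.length + tsize σ ≤ k →
      ys.Nodup → (∀ y ∈ ys, y ∉ Env.dom Γ) → Deriv Γ M σ →
      Deriv Γ (Bod (TT m) ys M) σ := by
  intro k
  induction k with
  | zero =>
      intro ys σ Γ M hle
      have := tsize_pos σ
      omega
  | succ k ih =>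
      intro ys σ Γ M hle nd fr d
      have harg : ∀ (δ : Ty) (y' : ℕ),
          Deriv [(y', δ)] (Term.app (TT m) (Term.var y')) δ := by
        intro δ y'
        have h := Deriv.arrE (hTid δ) (Deriv.ax y' δ) (disj_nil _)
        simpa using h
      cases ys with
      | nil => simpa [Bod_nil] using d
      | cons y ys' =>
        have hyΓ : y ∉ Env.dom Γ := fr y (by simp)
        have nd' : ys'.Nodup := (List.nodup_cons.mp nd).2
        have hyys' : y ∉ ys' := (List.nodup_cons.mp nd).1
        have fr' : ∀ (A : Ty), ∀ y' ∈ ys', y' ∉ Env.dom ((y, A) :: Γ) := by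
          intro A y' hy'
          show y' ∉ y :: Env.dom Γ
          simp only [List.mem_cons, not_or]
          exact ⟨fun h => hyys' (h ▸ hy'), fr y' (by simp [hy'])⟩
        cases σ with
        | atom a =>
            have dM : Deriv Γ M (Ty.arr Ty.omega (Ty.atom a)) :=
              Deriv.eqv d (SemEq.atomFun a)
            have dH := head_ext dM (harg Ty.omega y) hyΓ
            have body := ih ys' (Ty.atom a) ((y, Ty.omega) :: Γ) _
              (by simp [tsize, List.length_cons] at hle ⊢; omega) nd' (fr' _) dH
            rw [Bod_cons]
            exact Deriv.eqv (Deriv.arrI body) (SemEq.symm (SemEq.atomFun a))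
        | omega =>
            have dM : Deriv Γ M (Ty.arr Ty.omega Ty.omega) :=
              Deriv.eqv d SemEq.omegaFun
            have dH := head_ext dM (harg Ty.omega y) hyΓ
            have body := ih ys' Ty.omega ((y, Ty.omega) :: Γ) _
              (by simp [tsize, List.length_cons] at hle ⊢; omega) nd' (fr' _) dH
            rw [Bod_cons]
            exact Deriv.eqv (Deriv.arrI body) (SemEq.symm SemEq.omegaFun)
        | arr σ₁ σ₂ =>
            have dH := head_ext d (harg σ₁ y) hyΓ
            have body := ih ys' σ₂ ((y, σ₁) :: Γ) _
              (by simp [tsize, List.length_cons] at hle ⊢; omega) nd' (fr' _) dH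
            rw [Bod_cons]
            exact Deriv.arrI body
        | and σ₁ σ₂ =>
            exact Deriv.andI
              (ih (y :: ys') σ₁ Γ M
                (by simp [tsize, List.length_cons] at hle ⊢; omega) nd fr (Deriv.andE₁ d))
              (ih (y :: ys') σ₂ Γ M
                (by simp [tsize, List.length_cons] at hle ⊢; omega) nd fr (Deriv.andE₂ d))
        | or σ₁ σ₂ =>
            have hz : freshVar ((y :: ys').toFinset) ∉ (y :: ys') := fun h =>
              fresh_not_mem _ (List.mem_toFinset.mpr h)
            set z := freshVar ((y :: ys').toFinset) with hzdef
            have frz : ∀ (A : Ty), ∀ y' ∈ (y :: ys'), y' ∉ Env.dom [(z, A)] := by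
              intro A y' hy'
              simp only [Env.dom, List.map_cons, List.map_nil, List.mem_singleton]
              intro h
              exact hz (h ▸ hy')
            have b1 : Deriv [(z, Ty.and σ₁ Ty.omega)]
                (Bod (TT m) (y :: ys') (Term.var z)) (Ty.or σ₁ σ₂) :=
              Deriv.orI₁ (ih (y :: ys') σ₁ [(z, Ty.and σ₁ Ty.omega)] (Term.var z)
                (by simp [tsize, List.length_cons] at hle ⊢; omega) nd (frz _)
                (Deriv.andE₁ (Deriv.ax z _)))
            have b2 : Deriv [(z, Ty.and σ₂ Ty.omega)]
                (Bod (TT m) (y :: ys') (Term.var z)) (Ty.or σ₁ σ₂) :=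
              Deriv.orI₂ (ih (y :: ys') σ₂ [(z, Ty.and σ₂ Ty.omega)] (Term.var z)
                (by simp [tsize, List.length_cons] at hle ⊢; omega) nd (frz _)
                (Deriv.andE₁ (Deriv.ax z _)))
            have hN : Deriv Γ M (Ty.and (Ty.or σ₁ σ₂) Ty.omega) :=
              Deriv.andI d (toOmega d)
            have h := Deriv.orE b1 b2 hN (disj_nil Γ)
            rw [subst_Bod M hz (fv_TT m)] at h
            simpa using h

theorem Tid : ∀ (m : ℕ) (σ : Ty), Deriv [] (TT m) (Ty.arr σ σ) := by
  intro m
  induction m with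
  | zero => intro σ; exact Deriv.arrI (Deriv.ax 0 σ)
  | succ n ih =>
      intro σ
      rw [show TT (n+1)
            = Term.lam 0 (Bod (TT n) (List.range' 1 (n+1)) (Term.var 0)) from rfl]
      apply Deriv.arrI
      apply Brefl_inner n ih ((List.range' 1 (n+1)).length + tsize σ)
        (List.range' 1 (n+1)) σ [(0, σ)] (Term.var 0) le_rfl
        (List.nodup_range' 1 Nat.one_pos)
        ?_ (Deriv.ax 0 σ)
      intro y hy
      have : 1 ≤ y := (List.mem_range'_1.mp hy).1
      simp only [Env.dom, List.map_cons, List.map_nil, List.mem_singleton]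
      omega

theorem Brefl {m : ℕ} {ys : List ℕ} {σ : Ty} {Γ : Env} {M : Term}
    (nd : ys.Nodup) (fr : ∀ y ∈ ys, y ∉ Env.dom Γ) (d : Deriv Γ M σ) :
    Deriv Γ (Bod (TT m) ys M) σ :=
  Brefl_inner m (Tid m) _ ys σ Γ M le_rfl nd fr d

/-- A syntactic relation of coercions realizable by the towers. -/
inductive RR : Ty → Ty → Prop
  | refl (σ) : RR σ σ
  | omegaR (σ) : RR σ Ty.omega
  | preAnd₁ {σ ρ} (τ) : RR σ ρ → RR (Ty.and σ τ) ρ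
  | preAnd₂ {τ ρ} (σ) : RR τ ρ → RR (Ty.and σ τ) ρ
  | preOr {σ τ ρ} : RR σ ρ → RR τ ρ → RR (Ty.or σ τ) ρ
  | preOrK {σ τ ζ ρ} : RR (Ty.and σ ζ) ρ → RR (Ty.and τ ζ) ρ →
      RR (Ty.and (Ty.or σ τ) ζ) ρ
  | preOrK₂ {σ τ ζ ρ} : RR (Ty.and ζ σ) ρ → RR (Ty.and ζ τ) ρ →
      RR (Ty.and ζ (Ty.or σ τ)) ρ
  | postAnd {σ τ ρ} : RR σ τ → RR σ ρ → RR σ (Ty.and τ ρ)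
  | postOr₁ {σ τ} (ρ) : RR σ τ → RR σ (Ty.or τ ρ)
  | postOr₂ {σ τ} (ρ) : RR σ τ → RR σ (Ty.or ρ τ)
  | arr {σ₁ σ₂ τ₁ τ₂} : RR τ₁ σ₁ → RR σ₂ τ₂ →
      RR (Ty.arr σ₁ σ₂) (Ty.arr τ₁ τ₂)
  | anyArr {τ} (σ δ) : RR Ty.omega τ → RR σ (Ty.arr δ τ)
  | atomArrR {a τ} (δ) : RR (Ty.atom a) τ → RR (Ty.atom a) (Ty.arr δ τ)
  | arrAtom {x₁ x₂ a} : RR Ty.omega x₁ → RR x₂ (Ty.atom a) →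
      RR (Ty.arr x₁ x₂) (Ty.atom a)
  | arrAndDist (δ τ₁ τ₂) :
      RR (Ty.and (Ty.arr δ τ₁) (Ty.arr δ τ₂)) (Ty.arr δ (Ty.and τ₁ τ₂))
  | arrOrDist (σ τ ρ) :
      RR (Ty.and (Ty.arr σ ρ) (Ty.arr τ ρ)) (Ty.arr (Ty.or σ τ) ρ)

theorem tower_of_transformer {N : ℕ} {A B : Ty}
    (h : ∀ m, N ≤ m → ∀ (Γ : Env) (M : Term) (ys : List ℕ),
      ys.Nodup → (∀ y ∈ ys, y ∉ Env.dom Γ) → N ≤ ys.length →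
      Deriv Γ M A → Deriv Γ (Bod (TT m) ys M) B) :
    ∀ m, N + 1 ≤ m → Deriv [] (TT m) (Ty.arr A B) := by
  intro m hm
  obtain ⟨k, rfl⟩ : ∃ k, m = k + 1 := ⟨m - 1, by omega⟩
  rw [show TT (k+1)
        = Term.lam 0 (Bod (TT k) (List.range' 1 (k+1)) (Term.var 0)) from rfl]
  apply Deriv.arrI
  apply h k (by omega) [(0, A)] (Term.var 0) (List.range' 1 (k+1))
    (List.nodup_range' 1 Nat.one_pos) ?_ (by simp [List.length_range']; omega) (Deriv.ax 0 A)
  intro y hy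
  have := (List.mem_range'_1.mp hy).1
  simp only [Env.dom, List.map_cons, List.map_nil, List.mem_singleton]
  omega

theorem BB : ∀ {σ τ : Ty}, RR σ τ →
    ∃ N : ℕ, ∀ m, N ≤ m → ∀ (Γ : Env) (M : Term) (ys : List ℕ),
      ys.Nodup → (∀ y ∈ ys, y ∉ Env.dom Γ) → N ≤ ys.length →
      Deriv Γ M σ → Deriv Γ (Bod (TT m) ys M) τ := by
  intro σ τ h
  induction h with
  | refl σ =>
      exact ⟨0, fun m _ Γ M ys nd fr _ d => Brefl nd fr d⟩
  | omegaR σ =>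
      exact ⟨0, fun m _ Γ M ys nd fr _ d => toOmega (Brefl nd fr d)⟩
  | preAnd₁ τ h ih =>
      obtain ⟨N, hN⟩ := ih
      exact ⟨N, fun m hm Γ M ys nd fr hl d =>
        hN m hm Γ M ys nd fr hl (Deriv.andE₁ d)⟩
  | preAnd₂ σ h ih =>
      obtain ⟨N, hN⟩ := ih
      exact ⟨N, fun m hm Γ M ys nd fr hl d =>
        hN m hm Γ M ys nd fr hl (Deriv.andE₂ d)⟩
  | @preOr σ' τ' ρ' h₁ h₂ ih₁ ih₂ =>
      obtain ⟨N₁, hN₁⟩ := ih₁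
      obtain ⟨N₂, hN₂⟩ := ih₂
      refine ⟨max N₁ N₂, fun m hm Γ M ys nd fr hl d => ?_⟩
      have hz : freshVar ys.toFinset ∉ ys := fun h =>
        fresh_not_mem _ (List.mem_toFinset.mpr h)
      set z := freshVar ys.toFinset with hzdef
      have frz : ∀ (A : Ty), ∀ y' ∈ ys, y' ∉ Env.dom [(z, A)] := by
        intro A y' hy'
        simp only [Env.dom, List.map_cons, List.map_nil, List.mem_singleton]
        intro h; exact hz (h ▸ hy')
      have b1 := hN₁ m (by omega) [(z, Ty.and σ' Ty.omega)] (Term.var z) ys nd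
        (frz _) (by omega) (Deriv.andE₁ (Deriv.ax z _))
      have b2 := hN₂ m (by omega) [(z, Ty.and τ' Ty.omega)] (Term.var z) ys nd
        (frz _) (by omega) (Deriv.andE₁ (Deriv.ax z _))
      have hNd : Deriv Γ M (Ty.and (Ty.or σ' τ') Ty.omega) :=
        Deriv.andI d (toOmega d)
      have h := Deriv.orE b1 b2 hNd (disj_nil Γ)
      rw [subst_Bod M hz (fv_TT m)] at h
      simpa using h
  | @preOrK σ' τ' ζ' ρ' h₁ h₂ ih₁ ih₂ =>
      obtain ⟨N₁, hN₁⟩ := ih₁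
      obtain ⟨N₂, hN₂⟩ := ih₂
      refine ⟨max N₁ N₂, fun m hm Γ M ys nd fr hl d => ?_⟩
      have hz : freshVar ys.toFinset ∉ ys := fun h =>
        fresh_not_mem _ (List.mem_toFinset.mpr h)
      set z := freshVar ys.toFinset with hzdef
      have frz : ∀ (A : Ty), ∀ y' ∈ ys, y' ∉ Env.dom [(z, A)] := by
        intro A y' hy'
        simp only [Env.dom, List.map_cons, List.map_nil, List.mem_singleton]
        intro h; exact hz (h ▸ hy')
      have b1 := hN₁ m (by omega) [(z, Ty.and σ' ζ')] (Term.var z) ys nd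
        (frz _) (by omega) (Deriv.ax z _)
      have b2 := hN₂ m (by omega) [(z, Ty.and τ' ζ')] (Term.var z) ys nd
        (frz _) (by omega) (Deriv.ax z _)
      have h := Deriv.orE b1 b2 d (disj_nil Γ)
      rw [subst_Bod M hz (fv_TT m)] at h
      simpa using h
  | @preOrK₂ σ' τ' ζ' ρ' h₁ h₂ ih₁ ih₂ =>
      obtain ⟨N₁, hN₁⟩ := ih₁
      obtain ⟨N₂, hN₂⟩ := ih₂
      refine ⟨max N₁ N₂, fun m hm Γ M ys nd fr hl d => ?_⟩
      have hz : freshVar ys.toFinset ∉ ys := fun h =>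
        fresh_not_mem _ (List.mem_toFinset.mpr h)
      set z := freshVar ys.toFinset with hzdef
      have frz : ∀ (A : Ty), ∀ y' ∈ ys, y' ∉ Env.dom [(z, A)] := by
        intro A y' hy'
        simp only [Env.dom, List.map_cons, List.map_nil, List.mem_singleton]
        intro h; exact hz (h ▸ hy')
      have b1 := hN₁ m (by omega) [(z, Ty.and σ' ζ')] (Term.var z) ys nd
        (frz _) (by omega)
        (Deriv.andI (Deriv.andE₂ (Deriv.ax z _)) (Deriv.andE₁ (Deriv.ax z _)))
      have b2 := hN₂ m (by omega) [(z, Ty.and τ' ζ')] (Term.var z) ys nd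
        (frz _) (by omega)
        (Deriv.andI (Deriv.andE₂ (Deriv.ax z _)) (Deriv.andE₁ (Deriv.ax z _)))
      have hNd : Deriv Γ M (Ty.and (Ty.or σ' τ') ζ') :=
        Deriv.andI (Deriv.andE₂ d) (Deriv.andE₁ d)
      have h := Deriv.orE b1 b2 hNd (disj_nil Γ)
      rw [subst_Bod M hz (fv_TT m)] at h
      simpa using h
  | postAnd h₁ h₂ ih₁ ih₂ =>
      obtain ⟨N₁, hN₁⟩ := ih₁
      obtain ⟨N₂, hN₂⟩ := ih₂
      exact ⟨max N₁ N₂, fun m hm Γ M ys nd fr hl d =>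
        Deriv.andI (hN₁ m (by omega) Γ M ys nd fr (by omega) d)
          (hN₂ m (by omega) Γ M ys nd fr (by omega) d)⟩
  | postOr₁ ρ h ih =>
      obtain ⟨N, hN⟩ := ih
      exact ⟨N, fun m hm Γ M ys nd fr hl d =>
        Deriv.orI₁ (hN m hm Γ M ys nd fr hl d)⟩
  | postOr₂ ρ h ih =>
      obtain ⟨N, hN⟩ := ih
      exact ⟨N, fun m hm Γ M ys nd fr hl d =>
        Deriv.orI₂ (hN m hm Γ M ys nd fr hl d)⟩
  | @arr σ₁ σ₂ τ₁ τ₂ h₁ h₂ ih₁ ih₂ =>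
      obtain ⟨N₁, hN₁⟩ := ih₁
      obtain ⟨N₂, hN₂⟩ := ih₂
      refine ⟨N₁ + N₂ + 1, fun m hm Γ M ys nd fr hl d => ?_⟩
      match ys, hl with
      | y :: ys', hl =>
        have hyΓ : y ∉ Env.dom Γ := fr y (by simp)
        have nd' : ys'.Nodup := (List.nodup_cons.mp nd).2
        have hyys' : y ∉ ys' := (List.nodup_cons.mp nd).1
        have fr' : ∀ y' ∈ ys', y' ∉ Env.dom ((y, τ₁) :: Γ) := by
          intro y' hy'
          show y' ∉ y :: Env.dom Γ
          simp only [List.mem_cons, not_or]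
          exact ⟨fun h => hyys' (h ▸ hy'), fr y' (by simp [hy'])⟩
        have tow := tower_of_transformer hN₁ m (by omega)
        have darg : Deriv [(y, τ₁)] (Term.app (TT m) (Term.var y)) σ₁ := by
          simpa using Deriv.arrE tow (Deriv.ax y τ₁) (disj_nil _)
        have dH := head_ext d darg hyΓ
        have body := hN₂ m (by omega) ((y, τ₁) :: Γ) _ ys' nd' fr'
          (by simp [List.length_cons] at hl; omega) dH
        rw [Bod_cons]
        exact Deriv.arrI body
  | @anyArr τ' σ' δ h ih =>
      obtain ⟨N, hN⟩ := ih
      refine ⟨N + 1, fun m hm Γ M ys nd fr hl d => ?_⟩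
      match ys, hl with
      | y :: ys', hl =>
        have hyΓ : y ∉ Env.dom Γ := fr y (by simp)
        have nd' : ys'.Nodup := (List.nodup_cons.mp nd).2
        have hyys' : y ∉ ys' := (List.nodup_cons.mp nd).1
        have fr' : ∀ y' ∈ ys', y' ∉ Env.dom ((y, δ) :: Γ) := by
          intro y' hy'
          show y' ∉ y :: Env.dom Γ
          simp only [List.mem_cons, not_or]
          exact ⟨fun h => hyys' (h ▸ hy'), fr y' (by simp [hy'])⟩
        have dM : Deriv Γ M (Ty.arr Ty.omega Ty.omega) :=
          Deriv.eqv (toOmega d) SemEq.omegaFun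
        have darg : Deriv [(y, δ)] (Term.app (TT m) (Term.var y)) Ty.omega := by
          apply toOmega
          simpa using Deriv.arrE (Tid m δ) (Deriv.ax y δ) (disj_nil _)
        have dH := head_ext dM darg hyΓ
        have body := hN m (by omega) ((y, δ) :: Γ) _ ys' nd' fr'
          (by simp [List.length_cons] at hl; omega) dH
        rw [Bod_cons]
        exact Deriv.arrI body
  | @atomArrR a τ' δ h ih =>
      obtain ⟨N, hN⟩ := ih
      refine ⟨N + 1, fun m hm Γ M ys nd fr hl d => ?_⟩
      match ys, hl with
      | y :: ys', hl =>
        have hyΓ : y ∉ Env.dom Γ := fr y (by simp)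
        have nd' : ys'.Nodup := (List.nodup_cons.mp nd).2
        have hyys' : y ∉ ys' := (List.nodup_cons.mp nd).1
        have fr' : ∀ y' ∈ ys', y' ∉ Env.dom ((y, δ) :: Γ) := by
          intro y' hy'
          show y' ∉ y :: Env.dom Γ
          simp only [List.mem_cons, not_or]
          exact ⟨fun h => hyys' (h ▸ hy'), fr y' (by simp [hy'])⟩
        have dM : Deriv Γ M (Ty.arr Ty.omega (Ty.atom a)) :=
          Deriv.eqv d (SemEq.atomFun a)
        have darg : Deriv [(y, δ)] (Term.app (TT m) (Term.var y)) Ty.omega := by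
          apply toOmega
          simpa using Deriv.arrE (Tid m δ) (Deriv.ax y δ) (disj_nil _)
        have dH := head_ext dM darg hyΓ
        have body := hN m (by omega) ((y, δ) :: Γ) _ ys' nd' fr'
          (by simp [List.length_cons] at hl; omega) dH
        rw [Bod_cons]
        exact Deriv.arrI body
  | @arrAtom x₁ x₂ a h₁ h₂ ih₁ ih₂ =>
      obtain ⟨N₁, hN₁⟩ := ih₁
      obtain ⟨N₂, hN₂⟩ := ih₂
      refine ⟨N₁ + N₂ + 1, fun m hm Γ M ys nd fr hl d => ?_⟩
      match ys, hl with
      | y :: ys', hl =>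
        have hyΓ : y ∉ Env.dom Γ := fr y (by simp)
        have nd' : ys'.Nodup := (List.nodup_cons.mp nd).2
        have hyys' : y ∉ ys' := (List.nodup_cons.mp nd).1
        have fr' : ∀ y' ∈ ys', y' ∉ Env.dom ((y, Ty.omega) :: Γ) := by
          intro y' hy'
          show y' ∉ y :: Env.dom Γ
          simp only [List.mem_cons, not_or]
          exact ⟨fun h => hyys' (h ▸ hy'), fr y' (by simp [hy'])⟩
        have tow := tower_of_transformer hN₁ m (by omega)
        have darg : Deriv [(y, Ty.omega)] (Term.app (TT m) (Term.var y)) x₁ := by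
          simpa using Deriv.arrE tow (Deriv.ax y Ty.omega) (disj_nil _)
        have dH := head_ext d darg hyΓ
        have body := hN₂ m (by omega) ((y, Ty.omega) :: Γ) _ ys' nd' fr'
          (by simp [List.length_cons] at hl; omega) dH
        rw [Bod_cons]
        exact Deriv.eqv (Deriv.arrI body) (SemEq.symm (SemEq.atomFun a))
  | arrAndDist δ τ₁ τ₂ =>
      refine ⟨1, fun m hm Γ M ys nd fr hl d => ?_⟩
      match ys, hl with
      | y :: ys', hl =>
        have hyΓ : y ∉ Env.dom Γ := fr y (by simp)
        have nd' : ys'.Nodup := (List.nodup_cons.mp nd).2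
        have hyys' : y ∉ ys' := (List.nodup_cons.mp nd).1
        have fr' : ∀ y' ∈ ys', y' ∉ Env.dom ((y, δ) :: Γ) := by
          intro y' hy'
          show y' ∉ y :: Env.dom Γ
          simp only [List.mem_cons, not_or]
          exact ⟨fun h => hyys' (h ▸ hy'), fr y' (by simp [hy'])⟩
        have darg : Deriv [(y, δ)] (Term.app (TT m) (Term.var y)) δ := by
          simpa using Deriv.arrE (Tid m δ) (Deriv.ax y δ) (disj_nil _)
        have dH := Deriv.andI (head_ext (Deriv.andE₁ d) darg hyΓ)
          (head_ext (Deriv.andE₂ d) darg hyΓ)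
        have body := Brefl (m := m) nd' fr' dH
        rw [Bod_cons]
        exact Deriv.arrI body
  | arrOrDist σ' τ' ρ' =>
      refine ⟨1, fun m hm Γ M ys nd fr hl d => ?_⟩
      match ys, hl with
      | y :: ys', hl =>
        have hyΓ : y ∉ Env.dom Γ := fr y (by simp)
        have nd' : ys'.Nodup := (List.nodup_cons.mp nd).2
        have hyys' : y ∉ ys' := (List.nodup_cons.mp nd).1
        have fr' : ∀ y' ∈ ys', y' ∉ Env.dom ((y, Ty.or σ' τ') :: Γ) := by
          intro y' hy'
          show y' ∉ y :: Env.dom Γ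
          simp only [List.mem_cons, not_or]
          exact ⟨fun h => hyys' (h ▸ hy'), fr y' (by simp [hy'])⟩
        have hzM : freshVar (fv M ∪ (Env.dom Γ).toFinset) ∉ fv M := fun h =>
          fresh_not_mem _ (Finset.mem_union_left _ h)
        have hzΓ : freshVar (fv M ∪ (Env.dom Γ).toFinset) ∉ Env.dom Γ := fun h =>
          fresh_not_mem _ (Finset.mem_union_right _ (List.mem_toFinset.mpr h))
        set z := freshVar (fv M ∪ (Env.dom Γ).toFinset) with hzdef
        have br : ∀ (A : Ty), Deriv Γ M (Ty.arr A ρ') →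
            Deriv ((z, Ty.and A Ty.omega) :: Γ)
              (Term.app M (Term.app (TT m) (Term.var z))) ρ' := by
          intro A dMa
          have darg : Deriv [(z, Ty.and A Ty.omega)]
              (Term.app (TT m) (Term.var z)) A := by
            simpa using Deriv.arrE (Tid m A) (Deriv.andE₁ (Deriv.ax z _)) (disj_nil _)
          exact head_ext dMa darg hzΓ
        have b1 := br σ' (Deriv.andE₁ d)
        have b2 := br τ' (Deriv.andE₂ d)
        have hNy : Deriv [(y, Ty.or σ' τ')] (Term.var y)
            (Ty.and (Ty.or σ' τ') Ty.omega) :=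
          Deriv.andI (Deriv.ax y _) (toOmega (Deriv.ax y _))
        have horE := Deriv.orE b1 b2 hNy (disj_singleton hyΓ)
        have hsub : Term.subst (Term.app M (Term.app (TT m) (Term.var z))) z
            (Term.var y) = Term.app M (Term.app (TT m) (Term.var y)) := by
          show Term.app _ (Term.app _ _) = _
          rw [subst_of_not_mem_fv M _ hzM,
            subst_of_not_mem_fv (TT m) _ (by simp [fv_TT])]
          show Term.app M (Term.app (TT m) (if z = z then Term.var y else Term.var z)) = _
          rw [if_pos rfl]
        rw [hsub] at horE
        have dH := Deriv.perm horE (List.perm_append_comm)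
        have body := Brefl (m := m) nd' fr' dH
        rw [Bod_cons]
        exact Deriv.arrI body

/-- Height-indexed transitive-free core of `RR`. -/
inductive R0 : ℕ → Ty → Ty → Prop
  | refl (σ) : R0 0 σ σ
  | omegaR (σ) : R0 0 σ Ty.omega
  | preAnd₁ {n σ ρ} (τ) : R0 n σ ρ → R0 (n+1) (Ty.and σ τ) ρ
  | preAnd₂ {n τ ρ} (σ) : R0 n τ ρ → R0 (n+1) (Ty.and σ τ) ρ
  | preOr {n₁ n₂ σ τ ρ} : R0 n₁ σ ρ → R0 n₂ τ ρ → R0 (n₁+n₂+1) (Ty.or σ τ) ρ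
  | postAnd {n₁ n₂ σ τ ρ} : R0 n₁ σ τ → R0 n₂ σ ρ → R0 (n₁+n₂+1) σ (Ty.and τ ρ)
  | postOr₁ {n σ τ} (ρ) : R0 n σ τ → R0 (n+1) σ (Ty.or τ ρ)
  | postOr₂ {n σ τ} (ρ) : R0 n σ τ → R0 (n+1) σ (Ty.or ρ τ)
  | arr {n₁ n₂ σ₁ σ₂ τ₁ τ₂} : R0 n₁ τ₁ σ₁ → R0 n₂ σ₂ τ₂ →
      R0 (n₁+n₂+1) (Ty.arr σ₁ σ₂) (Ty.arr τ₁ τ₂)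
  | anyArr {n τ} (σ δ) : R0 n Ty.omega τ → R0 (n+1) σ (Ty.arr δ τ)
  | atomArrR {n a τ} (δ) : R0 n (Ty.atom a) τ → R0 (n+1) (Ty.atom a) (Ty.arr δ τ)
  | arrAtom {n₁ n₂ x₁ x₂ a} : R0 n₁ Ty.omega x₁ → R0 n₂ x₂ (Ty.atom a) →
      R0 (n₁+n₂+1) (Ty.arr x₁ x₂) (Ty.atom a)

theorem RR_of_R0 : ∀ {n σ τ}, R0 n σ τ → RR σ τ := by
  intro n σ τ h
  induction h with
  | refl σ => exact RR.refl σ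
  | omegaR σ => exact RR.omegaR σ
  | preAnd₁ τ _ ih => exact RR.preAnd₁ τ ih
  | preAnd₂ σ _ ih => exact RR.preAnd₂ σ ih
  | preOr _ _ ih₁ ih₂ => exact RR.preOr ih₁ ih₂
  | postAnd _ _ ih₁ ih₂ => exact RR.postAnd ih₁ ih₂
  | postOr₁ ρ _ ih => exact RR.postOr₁ ρ ih
  | postOr₂ ρ _ ih => exact RR.postOr₂ ρ ih
  | arr _ _ ih₁ ih₂ => exact RR.arr ih₁ ih₂
  | anyArr σ δ _ ih => exact RR.anyArr σ δ ih
  | atomArrR δ _ ih => exact RR.atomArrR δ ih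
  | arrAtom _ _ ih₁ ih₂ => exact RR.arrAtom ih₁ ih₂

/-- Cut elimination / transitivity for the core relation. -/
theorem R0_trans : ∀ (b : Ty) (n₁ n₂ : ℕ) (a c : Ty),
    R0 n₁ a b → R0 n₂ b c → ∃ k, R0 k a c := by
  suffices h : ∀ (S H : ℕ) (b : Ty) (n₁ n₂ : ℕ) (a c : Ty), tsize b ≤ S →
      n₁ + n₂ < H → R0 n₁ a b → R0 n₂ b c → ∃ k, R0 k a c by
    intro b n₁ n₂ a c h₁ h₂
    exact h (tsize b) (n₁ + n₂ + 1) b n₁ n₂ a c le_rfl (by omega) h₁ h₂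
  intro S
  induction S with
  | zero =>
      intro H b n₁ n₂ a c hS
      have := tsize_pos b
      omega
  | succ S ihS =>
      intro H
      induction H with
      | zero => intro b n₁ n₂ a c _ hH; omega
      | succ H ihH =>
        intro b n₁ n₂ a c hS hH h₁ h₂
        cases h₂ with
        | refl => exact ⟨n₁, h₁⟩
        | omegaR => exact ⟨0, R0.omegaR a⟩
        | @postAnd m₁ m₂ _ τ ρ r₁ r₂ =>
            obtain ⟨k₁, g₁⟩ := ihH b n₁ m₁ a τ hS (by omega) h₁ r₁
            obtain ⟨k₂, g₂⟩ := ihH b n₁ m₂ a ρ hS (by omega) h₁ r₂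
            exact ⟨_, R0.postAnd g₁ g₂⟩
        | @postOr₁ m _ τ ρ r =>
            obtain ⟨k, g⟩ := ihH b n₁ m a τ hS (by omega) h₁ r
            exact ⟨_, R0.postOr₁ ρ g⟩
        | @postOr₂ m _ τ ρ r =>
            obtain ⟨k, g⟩ := ihH b n₁ m a τ hS (by omega) h₁ r
            exact ⟨_, R0.postOr₂ ρ g⟩
        | @anyArr m τ _ δ r => exact ⟨_, R0.anyArr a δ r⟩
        | @preAnd₁ m m₁ ρ m₂ r =>
            cases h₁ with
            | refl => exact ⟨_, R0.preAnd₁ m₂ r⟩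
            | @preAnd₁ n σ' _ τ' s =>
                obtain ⟨k, g⟩ := ihH _ n (m+1) _ _ hS (by omega) s (R0.preAnd₁ m₂ r)
                exact ⟨_, R0.preAnd₁ τ' g⟩
            | @preAnd₂ n τ' _ σ' s =>
                obtain ⟨k, g⟩ := ihH _ n (m+1) _ _ hS (by omega) s (R0.preAnd₁ m₂ r)
                exact ⟨_, R0.preAnd₂ σ' g⟩
            | @preOr n₁' n₂' σ' τ' _ s t =>
                obtain ⟨k₁, g₁⟩ := ihH _ n₁' (m+1) _ _ hS (by omega) s (R0.preAnd₁ m₂ r)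
                obtain ⟨k₂, g₂⟩ := ihH _ n₂' (m+1) _ _ hS (by omega) t (R0.preAnd₁ m₂ r)
                exact ⟨_, R0.preOr g₁ g₂⟩
            | @postAnd n₁' n₂' _ _ _ s t =>
                exact ihS (n₁' + m + 1) m₁ n₁' m a _
                  (by have := tsize_pos m₂; simp [tsize] at hS; omega) (by omega) s r
        | @preAnd₂ m m₂' ρ m₁ r =>
            cases h₁ with
            | refl => exact ⟨_, R0.preAnd₂ m₁ r⟩
            | @preAnd₁ n σ' _ τ' s =>
                obtain ⟨k, g⟩ := ihH _ n (m+1) _ _ hS (by omega) s (R0.preAnd₂ m₁ r)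
                exact ⟨_, R0.preAnd₁ τ' g⟩
            | @preAnd₂ n τ' _ σ' s =>
                obtain ⟨k, g⟩ := ihH _ n (m+1) _ _ hS (by omega) s (R0.preAnd₂ m₁ r)
                exact ⟨_, R0.preAnd₂ σ' g⟩
            | @preOr n₁' n₂' σ' τ' _ s t =>
                obtain ⟨k₁, g₁⟩ := ihH _ n₁' (m+1) _ _ hS (by omega) s (R0.preAnd₂ m₁ r)
                obtain ⟨k₂, g₂⟩ := ihH _ n₂' (m+1) _ _ hS (by omega) t (R0.preAnd₂ m₁ r)
                exact ⟨_, R0.preOr g₁ g₂⟩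
            | @postAnd n₁' n₂' _ _ _ s t =>
                exact ihS (n₂' + m + 1) m₂' n₂' m a _
                  (by have := tsize_pos m₁; simp [tsize] at hS; omega) (by omega) t r
        | @preOr m₁' m₂' mσ mτ ρ r₁ r₂ =>
            cases h₁ with
            | refl => exact ⟨_, R0.preOr r₁ r₂⟩
            | @preAnd₁ n σ' _ τ' s =>
                obtain ⟨k, g⟩ := ihH _ n (m₁'+m₂'+1) _ _ hS (by omega) s (R0.preOr r₁ r₂)
                exact ⟨_, R0.preAnd₁ τ' g⟩
            | @preAnd₂ n τ' _ σ' s =>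
                obtain ⟨k, g⟩ := ihH _ n (m₁'+m₂'+1) _ _ hS (by omega) s (R0.preOr r₁ r₂)
                exact ⟨_, R0.preAnd₂ σ' g⟩
            | @preOr n₁' n₂' σ' τ' _ s t =>
                obtain ⟨k₁, g₁⟩ := ihH _ n₁' (m₁'+m₂'+1) _ _ hS (by omega) s (R0.preOr r₁ r₂)
                obtain ⟨k₂, g₂⟩ := ihH _ n₂' (m₁'+m₂'+1) _ _ hS (by omega) t (R0.preOr r₁ r₂)
                exact ⟨_, R0.preOr g₁ g₂⟩
            | @postOr₁ n _ _ _ s =>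
                exact ihS (n + m₁' + 1) mσ n m₁' a _
                  (by have := tsize_pos mτ; simp [tsize] at hS; omega) (by omega) s r₁
            | @postOr₂ n _ _ _ s =>
                exact ihS (n + m₂' + 1) mτ n m₂' a _
                  (by have := tsize_pos mσ; simp [tsize] at hS; omega) (by omega) s r₂
        | @arr m₁' m₂' mσ₁ mσ₂ t₁ t₂ rd rc =>
            cases h₁ with
            | refl => exact ⟨_, R0.arr rd rc⟩
            | @preAnd₁ n σ' _ τ' s =>
                obtain ⟨k, g⟩ := ihH _ n (m₁'+m₂'+1) _ _ hS (by omega) s (R0.arr rd rc)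
                exact ⟨_, R0.preAnd₁ τ' g⟩
            | @preAnd₂ n τ' _ σ' s =>
                obtain ⟨k, g⟩ := ihH _ n (m₁'+m₂'+1) _ _ hS (by omega) s (R0.arr rd rc)
                exact ⟨_, R0.preAnd₂ σ' g⟩
            | @preOr n₁' n₂' σ' τ' _ s t =>
                obtain ⟨k₁, g₁⟩ := ihH _ n₁' (m₁'+m₂'+1) _ _ hS (by omega) s (R0.arr rd rc)
                obtain ⟨k₂, g₂⟩ := ihH _ n₂' (m₁'+m₂'+1) _ _ hS (by omega) t (R0.arr rd rc)
                exact ⟨_, R0.preOr g₁ g₂⟩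
            | @arr n₁' n₂' x₁ x₂ _ _ sd sc =>
                obtain ⟨k₁, g₁⟩ := ihS (m₁' + n₁' + 1) mσ₁ m₁' n₁' t₁ x₁
                  (by have := tsize_pos mσ₂; simp [tsize] at hS; omega) (by omega) rd sd
                obtain ⟨k₂, g₂⟩ := ihS (n₂' + m₂' + 1) mσ₂ n₂' m₂' x₂ t₂
                  (by have := tsize_pos mσ₁; simp [tsize] at hS; omega) (by omega) sc rc
                exact ⟨_, R0.arr g₁ g₂⟩
            | @anyArr n _ _ _ s =>
                obtain ⟨k, g⟩ := ihS (n + m₂' + 1) mσ₂ n m₂' Ty.omega t₂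
                  (by have := tsize_pos mσ₁; simp [tsize] at hS; omega) (by omega) s rc
                exact ⟨_, R0.anyArr a t₁ g⟩
            | @atomArrR n a' _ _ s =>
                obtain ⟨k, g⟩ := ihS (n + m₂' + 1) mσ₂ n m₂' (Ty.atom a') t₂
                  (by have := tsize_pos mσ₁; simp [tsize] at hS; omega) (by omega) s rc
                exact ⟨_, R0.atomArrR t₁ g⟩
        | @atomArrR m a' τ' δ r =>
            cases h₁ with
            | refl => exact ⟨_, R0.atomArrR δ r⟩
            | @preAnd₁ n σ' _ τ'' s =>
                obtain ⟨k, g⟩ := ihH _ n (m+1) _ _ hS (by omega) s (R0.atomArrR δ r)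
                exact ⟨_, R0.preAnd₁ τ'' g⟩
            | @preAnd₂ n τ'' _ σ' s =>
                obtain ⟨k, g⟩ := ihH _ n (m+1) _ _ hS (by omega) s (R0.atomArrR δ r)
                exact ⟨_, R0.preAnd₂ σ' g⟩
            | @preOr n₁' n₂' σ' τ'' _ s t =>
                obtain ⟨k₁, g₁⟩ := ihH _ n₁' (m+1) _ _ hS (by omega) s (R0.atomArrR δ r)
                obtain ⟨k₂, g₂⟩ := ihH _ n₂' (m+1) _ _ hS (by omega) t (R0.atomArrR δ r)
                exact ⟨_, R0.preOr g₁ g₂⟩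
            | @arrAtom n₁' n₂' x₁ x₂ _ sd sc =>
                obtain ⟨k₁, g₁⟩ := ihH _ 0 n₁' δ x₁ (by simp [tsize])
                  (by omega) (R0.omegaR δ) sd
                obtain ⟨k₂, g₂⟩ := ihH _ n₂' m x₂ τ' hS (by omega) sc r
                exact ⟨_, R0.arr g₁ g₂⟩
        | @arrAtom m₁' m₂' μ₁ μ₂ a' rd rc =>
            cases h₁ with
            | refl => exact ⟨_, R0.arrAtom rd rc⟩
            | @preAnd₁ n σ' _ τ'' s =>
                obtain ⟨k, g⟩ := ihH _ n (m₁'+m₂'+1) _ _ hS (by omega) s (R0.arrAtom rd rc)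
                exact ⟨_, R0.preAnd₁ τ'' g⟩
            | @preAnd₂ n τ'' _ σ' s =>
                obtain ⟨k, g⟩ := ihH _ n (m₁'+m₂'+1) _ _ hS (by omega) s (R0.arrAtom rd rc)
                exact ⟨_, R0.preAnd₂ σ' g⟩
            | @preOr n₁' n₂' σ' τ'' _ s t =>
                obtain ⟨k₁, g₁⟩ := ihH _ n₁' (m₁'+m₂'+1) _ _ hS (by omega) s (R0.arrAtom rd rc)
                obtain ⟨k₂, g₂⟩ := ihH _ n₂' (m₁'+m₂'+1) _ _ hS (by omega) t (R0.arrAtom rd rc)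
                exact ⟨_, R0.preOr g₁ g₂⟩
            | @arr n₁' n₂' x₁ x₂ _ _ sd sc =>
                obtain ⟨k₁, g₁⟩ := ihS (m₁' + n₁' + 1) μ₁ m₁' n₁' Ty.omega x₁
                  (by have := tsize_pos μ₂; simp [tsize] at hS; omega) (by omega) rd sd
                obtain ⟨k₂, g₂⟩ := ihS (n₂' + m₂' + 1) μ₂ n₂' m₂' x₂ _
                  (by have := tsize_pos μ₁; simp [tsize] at hS; omega) (by omega) sc rc
                exact ⟨_, R0.arrAtom g₁ g₂⟩
            | @anyArr n _ _ _ s =>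
                obtain ⟨k, g⟩ := ihS (n + m₂' + 1) μ₂ n m₂' Ty.omega _
                  (by have := tsize_pos μ₁; simp [tsize] at hS; omega) (by omega) s rc
                obtain ⟨k', g'⟩ := ihS (k + 1) Ty.omega 0 k a _
                  (by have := tsize_pos μ₁; have := tsize_pos μ₂; simp [tsize] at hS ⊢; omega)
                  (by omega) (R0.omegaR a) g
                exact ⟨k', g'⟩
            | @atomArrR n b' _ _ s =>
                exact ihS (n + m₂' + 1) μ₂ n m₂' (Ty.atom b') _
                  (by have := tsize_pos μ₁; simp [tsize] at hS; omega) (by omega) s rc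

theorem NormLe_R0 : ∀ {σ τ : Ty}, NormLe σ τ → ∃ n, R0 n σ τ := by
  intro σ τ h
  induction h with
  | refl σ => exact ⟨0, R0.refl σ⟩
  | trans h₁ h₂ ih₁ ih₂ =>
      obtain ⟨n₁, g₁⟩ := ih₁
      obtain ⟨n₂, g₂⟩ := ih₂
      exact R0_trans _ n₁ n₂ _ _ g₁ g₂
  | leOmega σ => exact ⟨0, R0.omegaR σ⟩
  | andE₁ σ τ => exact ⟨1, R0.preAnd₁ τ (R0.refl σ)⟩
  | andE₂ σ τ => exact ⟨1, R0.preAnd₂ σ (R0.refl τ)⟩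
  | orI₁ σ τ => exact ⟨1, R0.postOr₁ τ (R0.refl σ)⟩
  | orI₂ σ τ => exact ⟨1, R0.postOr₂ σ (R0.refl τ)⟩
  | andI h₁ h₂ ih₁ ih₂ =>
      obtain ⟨n₁, g₁⟩ := ih₁
      obtain ⟨n₂, g₂⟩ := ih₂
      exact ⟨_, R0.postAnd g₁ g₂⟩
  | orE h₁ h₂ ih₁ ih₂ =>
      obtain ⟨n₁, g₁⟩ := ih₁
      obtain ⟨n₂, g₂⟩ := ih₂
      exact ⟨_, R0.preOr g₁ g₂⟩
  | atomArr a σ => exact ⟨1, R0.atomArrR σ (R0.refl _)⟩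
  | omegaArr σ => exact ⟨1, R0.anyArr Ty.omega σ (R0.refl _)⟩
  | arr h₁ h₂ ih₁ ih₂ =>
      obtain ⟨n₁, g₁⟩ := ih₁
      obtain ⟨n₂, g₂⟩ := ih₂
      exact ⟨_, R0.arr g₁ g₂⟩

theorem NR {σ τ : Ty} (h : NormLe σ τ) : RR σ τ := by
  obtain ⟨n, g⟩ := NormLe_R0 h
  exact RR_of_R0 g

theorem ofFn_get_map {α β : Type _} (l : List α) (f : α → β) :
    (List.ofFn fun i : Fin l.length => f (l.get i)) = l.map f := by
  conv_rhs => rw [← List.ofFn_get l]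
  rw [List.map_ofFn]
  rfl

theorem FHInf_TT : ∀ n, FHInf (TT n) := by
  intro n
  induction n with
  | zero =>
      have h0 := FHInf.mk 0 [] [] rfl (by simp) List.nodup_nil
        (by intro P hP; simp at hP)
      simpa [TT, lamList, appList] using h0
  | succ n ih =>
      have hlen : (List.replicate (n+1) (TT n)).length
          = (List.range' 1 (n+1)).length := by
        simp
      have key := FHInf.mk 0 (List.range' 1 (n+1)) (List.replicate (n+1) (TT n))
        hlen (by simp [List.mem_range'_1]) (List.nodup_range' 1 Nat.one_pos)
        (by intro P hP; rw [List.eq_of_mem_replicate hP]; exact ih)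
      have e : (List.ofFn fun i : Fin (List.range' 1 (n+1)).length =>
            Term.app ((List.replicate (n+1) (TT n)).get (Fin.cast hlen.symm i))
              (Term.var ((List.range' 1 (n+1)).get i)))
          = (List.range' 1 (n+1)).map (fun y => Term.app (TT n) (Term.var y)) := by
        rw [← ofFn_get_map (List.range' 1 (n+1)) (fun y => Term.app (TT n) (Term.var y))]
        congr 1
        funext i
        rw [List.get_eq_getElem, List.getElem_replicate]  -- deprecated ok
      rw [e] at key
      exact key

theorem strongIso_of_RR {σ τ : Ty} (h₁ : RR σ τ) (h₂ : RR τ σ) : StrongIso σ τ := by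
  obtain ⟨N₁, hB₁⟩ := BB h₁
  obtain ⟨N₂, hB₂⟩ := BB h₂
  refine ⟨TT (N₁ + N₂ + 1), ⟨TT (N₁ + N₂ + 1), EqvGen.refl _, FHInf_TT _⟩, ?_, ?_⟩
  · exact tower_of_transformer hB₁ (N₁ + N₂ + 1) (by omega)
  · exact tower_of_transformer hB₂ (N₁ + N₂ + 1) (by omega)

theorem inner_pair : ∀ {σ τ : Ty}, InnerStep σ τ → RR σ τ ∧ RR τ σ := by
  intro σ τ h
  cases h with
  | atomRule a =>
      exact ⟨RR.arrAtom (RR.refl _) (RR.refl _), RR.atomArrR Ty.omega (RR.refl _)⟩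
  | omegaRule hle hne => exact ⟨RR.omegaR _, NR hle⟩
  | distArrAnd σ τ ρ =>
      exact ⟨RR.postAnd (RR.arr (RR.refl _) (RR.preAnd₁ _ (RR.refl _)))
          (RR.arr (RR.refl _) (RR.preAnd₂ _ (RR.refl _))),
        RR.arrAndDist σ τ ρ⟩
  | distAndArr σ τ ρ ζ =>
      refine ⟨RR.arr ?_ (RR.refl ζ), RR.arr ?_ (RR.refl ζ)⟩
      · exact RR.preOr
          (RR.postAnd (RR.preAnd₁ ρ (RR.postOr₁ τ (RR.refl σ)))
            (RR.preAnd₂ σ (RR.refl ρ)))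
          (RR.postAnd (RR.preAnd₁ ρ (RR.postOr₂ σ (RR.refl τ)))
            (RR.preAnd₂ τ (RR.refl ρ)))
      · exact RR.preOrK (RR.postOr₁ _ (RR.refl _)) (RR.postOr₂ _ (RR.refl _))
  | distOrArr σ τ ρ =>
      exact ⟨RR.postAnd (RR.arr (RR.postOr₁ τ (RR.refl σ)) (RR.refl ρ))
          (RR.arr (RR.postOr₂ σ (RR.refl τ)) (RR.refl ρ)),
        RR.arrOrDist σ τ ρ⟩
  | distArrOr σ τ ρ ζ =>
      refine ⟨RR.arr (RR.refl σ) ?_, RR.arr (RR.refl σ) ?_⟩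
      · exact RR.preOr
          (RR.postAnd (RR.postOr₁ ζ (RR.preAnd₁ ρ (RR.refl τ)))
            (RR.postOr₁ ζ (RR.preAnd₂ τ (RR.refl ρ))))
          (RR.postAnd (RR.postOr₂ τ (RR.refl ζ)) (RR.postOr₂ ρ (RR.refl ζ)))
      · exact RR.preOrK
          (RR.preOrK₂ (RR.postOr₁ ζ (RR.refl (Ty.and τ ρ)))
            (RR.preAnd₂ τ (RR.postOr₂ (Ty.and τ ρ) (RR.refl ζ))))
          (RR.preAnd₁ (Ty.or ρ ζ) (RR.postOr₂ (Ty.and τ ρ) (RR.refl ζ)))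
  | eraseAnd h =>
      rename_i t
      exact ⟨RR.preAnd₁ t (RR.refl τ), RR.postAnd (RR.refl τ) (NR h)⟩
  | eraseOr h =>
      rename_i s
      exact ⟨RR.preOr (NR h) (RR.refl τ), RR.postOr₂ s (RR.refl τ)⟩

theorem ctx_pair : ∀ (C : TyCtx) {σ τ : Ty}, RR σ τ → RR τ σ →
    RR (C.fill σ) (C.fill τ) ∧ RR (C.fill τ) (C.fill σ) := by
  intro C
  induction C with
  | hole => intro σ τ h₁ h₂; exact ⟨h₁, h₂⟩
  | arrL C ρ ih =>
      intro σ τ h₁ h₂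
      obtain ⟨g₁, g₂⟩ := ih h₁ h₂
      exact ⟨RR.arr g₂ (RR.refl ρ), RR.arr g₁ (RR.refl ρ)⟩
  | arrR ρ C ih =>
      intro σ τ h₁ h₂
      obtain ⟨g₁, g₂⟩ := ih h₁ h₂
      exact ⟨RR.arr (RR.refl ρ) g₁, RR.arr (RR.refl ρ) g₂⟩
  | andL C ρ ih =>
      intro σ τ h₁ h₂
      obtain ⟨g₁, g₂⟩ := ih h₁ h₂
      exact ⟨RR.postAnd (RR.preAnd₁ ρ g₁) (RR.preAnd₂ _ (RR.refl ρ)),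
        RR.postAnd (RR.preAnd₁ ρ g₂) (RR.preAnd₂ _ (RR.refl ρ))⟩
  | andR ρ C ih =>
      intro σ τ h₁ h₂
      obtain ⟨g₁, g₂⟩ := ih h₁ h₂
      exact ⟨RR.postAnd (RR.preAnd₁ _ (RR.refl ρ)) (RR.preAnd₂ ρ g₁),
        RR.postAnd (RR.preAnd₁ _ (RR.refl ρ)) (RR.preAnd₂ ρ g₂)⟩
  | orL C ρ ih =>
      intro σ τ h₁ h₂
      obtain ⟨g₁, g₂⟩ := ih h₁ h₂
      exact ⟨RR.preOr (RR.postOr₁ ρ g₁) (RR.postOr₂ _ (RR.refl ρ)),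
        RR.preOr (RR.postOr₁ ρ g₂) (RR.postOr₂ _ (RR.refl ρ))⟩
  | orR ρ C ih =>
      intro σ τ h₁ h₂
      obtain ⟨g₁, g₂⟩ := ih h₁ h₂
      exact ⟨RR.preOr (RR.postOr₁ _ (RR.refl ρ)) (RR.postOr₂ ρ g₁),
        RR.preOr (RR.postOr₁ _ (RR.refl ρ)) (RR.postOr₂ ρ g₂)⟩

theorem top_pair : ∀ {σ τ : Ty}, TopStep σ τ → RR σ τ ∧ RR τ σ := by
  intro σ τ h
  induction h with
  | ctx C hi => exact ctx_pair C (inner_pair hi).1 (inner_pair hi).2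
  | dist σ τ ρ =>
      constructor
      · exact RR.preOr
          (RR.postAnd (RR.postOr₁ ρ (RR.preAnd₁ τ (RR.refl σ)))
            (RR.postOr₁ ρ (RR.preAnd₂ σ (RR.refl τ))))
          (RR.postAnd (RR.postOr₂ σ (RR.refl ρ)) (RR.postOr₂ τ (RR.refl ρ)))
      · exact RR.preOrK
          (RR.preOrK₂ (RR.postOr₁ ρ (RR.refl (Ty.and σ τ)))
            (RR.preAnd₂ σ (RR.postOr₂ (Ty.and σ τ) (RR.refl ρ))))
          (RR.preAnd₁ (Ty.or τ ρ) (RR.postOr₂ (Ty.and σ τ) (RR.refl ρ)))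
  | arrR σ hts ih => exact ⟨RR.arr (RR.refl σ) ih.1, RR.arr (RR.refl σ) ih.2⟩

/-- Soundness of the normalisation rules: each inner rule `σ ⇝ τ` and each
top rule `σ ⟹ τ` preserves strong isomorphism. -/
theorem normalisation_rules_sound :
    (∀ σ τ : Ty, InnerStep σ τ → StrongIso σ τ) ∧
    (∀ σ τ : Ty, TopStep σ τ → StrongIso σ τ) := by
  constructor
  · intro σ τ h
    exact strongIso_of_RR (inner_pair h).1 (inner_pair h).2
  · intro σ τ h
    exact strongIso_of_RR (top_pair h).1 (top_pair h).2

end TypeIso
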